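/- For every odd integer m > 1, the q-binomial coefficient qbinom(m-1, (m-1)/2) satisfies qbinom(m-1,(m-1)/2) ≡ (-1)^{(m-1)/2} q^{(1-m^2)/8} (mod Φ_m(q)), i.e., Φ_m(q) divides qbinom(m-1,(m-1)/2) - (-1)^{(m-1)/2} q^{(1-m^2)/8} in ℤ[q, q^{-1}]. -/

import Mathlib

open RatFunc

noncomputable def q : RatFunc ℚ := RatFunc.X

/-- q-shifted factorial `(a;b)_m = ∏_{j=0}^{m-1} (1 - a b^j)`. -/
noncomputable def qpoch (a b : RatFunc ℚ) (m : ℕ) : RatFunc ℚ :=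
  ∏ j ∈ Finset.range m, (1 - a * b ^ j)

/-- q-integer `[m] = (1-q^m)/(1-q)` for an arbitrary integer `m`. -/
noncomputable def qintZ (m : ℤ) : RatFunc ℚ := (1 - q ^ m) / (1 - q)

/-- q-integer `[m] = 1 + q + ⋯ + q^{m-1}`. -/
noncomputable def qint (m : ℕ) : RatFunc ℚ := ∑ i ∈ Finset.range m, q ^ i

/-- q-binomial coefficient `(q;q)_n / ((q;q)_k (q;q)_{n-k})`. -/
noncomputable def qbinom (n k : ℕ) : RatFunc ℚ :=
  qpoch q q n / (qpoch q q k * qpoch q q (n - k))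

/-- the natural inclusion `ℤ[q] → ℚ(q)` -/
noncomputable def ι (P : Polynomial ℤ) : RatFunc ℚ :=
  algebraMap (Polynomial ℚ) (RatFunc ℚ) (P.map (Int.castRingHom ℚ))

/-- `Φ_m(q)` divides `qbinom(m-1,(m-1)/2) - (-1)^{(m-1)/2} q^{(1-m²)/8}` in the Laurent
polynomial ring `ℤ[q,q⁻¹]`: since the units of `ℤ[q,q⁻¹]` are `± q^j`, this divisibility
is expressed by saying that some `q^j`-multiple of the difference is `Φ_m(q)` times a
polynomial with integer coefficients. -/
noncomputable def ιHom : Polynomial ℤ →+* RatFunc ℚ :=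
  (algebraMap (Polynomial ℚ) (RatFunc ℚ)).comp (Polynomial.mapRingHom (Int.castRingHom ℚ))

lemma ι_eq (P : Polynomial ℤ) : ι P = ιHom P := rfl

lemma ι_X : ι Polynomial.X = q := by
  simp [ι, q, Polynomial.map_X, RatFunc.algebraMap_X]

lemma ι_injective : Function.Injective ι := by
  intro a b h
  exact Polynomial.map_injective _ Int.cast_injective (RatFunc.algebraMap_injective ℚ h)

lemma q_pow_ne_one (j : ℕ) (hj : j ≠ 0) : q ^ j ≠ 1 := by
  intro h
  have : ι (Polynomial.X ^ j) = ι 1 := by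
    rw [ι_eq, ι_eq, map_pow, map_one, ← ι_eq, ι_X, h]
  have := ι_injective this
  have hd := congrArg Polynomial.natDegree this
  simp [Polynomial.natDegree_X_pow] at hd
  exact hj hd

lemma one_sub_q_pow_ne_zero (j : ℕ) (hj : j ≠ 0) : 1 - q ^ j ≠ 0 :=
  sub_ne_zero.mpr (Ne.symm (q_pow_ne_one j hj))

lemma qpoch_eq (n : ℕ) : qpoch q q n = ∏ j ∈ Finset.range n, (1 - q ^ (j + 1)) := by
  unfold qpoch
  refine Finset.prod_congr rfl fun j _ => by rw [pow_succ']

lemma qpoch_ne_zero (n : ℕ) : qpoch q q n ≠ 0 := by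
  rw [qpoch_eq]
  exact Finset.prod_ne_zero_iff.mpr fun j _ => one_sub_q_pow_ne_zero _ (Nat.succ_ne_zero j)

lemma qpoch_succ (n : ℕ) : qpoch q q (n + 1) = qpoch q q n * (1 - q ^ (n + 1)) := by
  rw [qpoch_eq, qpoch_eq, Finset.prod_range_succ]

lemma qpoch_zero : qpoch q q 0 = 1 := by simp [qpoch]

lemma qbinom_zero (n : ℕ) : qbinom n 0 = 1 := by
  simp only [qbinom, qpoch_zero, one_mul, Nat.sub_zero]
  exact div_self (qpoch_ne_zero n)

lemma qbinom_self (n : ℕ) : qbinom n n = 1 := by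
  simp only [qbinom, qpoch_zero, mul_one, Nat.sub_self]
  exact div_self (qpoch_ne_zero n)

lemma qbinom_pascal (n k : ℕ) (h : k + 1 ≤ n) :
    qbinom (n + 1) (k + 1) = qbinom n k + q ^ (k + 1) * qbinom n (k + 1) := by
  obtain ⟨a, rfl⟩ : ∃ a, n = k + 1 + a := ⟨n - (k + 1), by omega⟩
  have e1 : k + 1 + a + 1 - (k + 1) = a + 1 := by omega
  have e2 : k + 1 + a - k = a + 1 := by omega
  have e3 : k + 1 + a - (k + 1) = a := by omega
  rw [qbinom, qbinom, qbinom, e1, e2, e3]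
  rw [show k + 1 + a + 1 = (k + 1 + a) + 1 from rfl, qpoch_succ (k + 1 + a),
    qpoch_succ k, qpoch_succ a]
  have hpow : q ^ (k + 1 + a + 1) = q ^ (k + 1) * q ^ (a + 1) := by
    rw [← pow_add, show k + 1 + (a + 1) = k + 1 + a + 1 by omega]
  have h1 := qpoch_ne_zero (k + 1 + a)
  have h2 := qpoch_ne_zero k
  have h3 := qpoch_ne_zero a
  have h4 := one_sub_q_pow_ne_zero (k + 1) (by omega)
  have h5 := one_sub_q_pow_ne_zero (a + 1) (by omega)
  field_simp
  rw [hpow]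
  ring

noncomputable def gb : ℕ → ℕ → Polynomial ℤ
  | _, 0 => 1
  | 0, _ + 1 => 0
  | n + 1, k + 1 => gb n k + Polynomial.X ^ (k + 1) * gb n (k + 1)

lemma gb_zero (n : ℕ) : gb n 0 = 1 := by cases n <;> rfl

lemma gb_succ_succ (n k : ℕ) :
    gb (n + 1) (k + 1) = gb n k + Polynomial.X ^ (k + 1) * gb n (k + 1) := rfl

lemma gb_of_lt : ∀ n k, n < k → gb n k = 0 := by
  intro n
  induction n with
  | zero => intro k hk; match k, hk with | k + 1, _ => rfl
  | succ n ih =>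
    intro k hk
    match k, hk with
    | k + 1, hk =>
      rw [gb_succ_succ, ih k (by omega), ih (k + 1) (by omega)]
      ring

lemma gb_self : ∀ n, gb n n = 1 := by
  intro n
  induction n with
  | zero => rfl
  | succ n ih => rw [gb_succ_succ, ih, gb_of_lt n (n + 1) (by omega)]; ring

lemma ι_gb : ∀ n k, k ≤ n → ι (gb n k) = qbinom n k := by
  intro n
  induction n with
  | zero =>
    intro k hk
    interval_cases k
    rw [gb_zero, qbinom_zero, ι_eq, map_one]
  | succ n ih =>
    intro k hk
    match k with
    | 0 => rw [gb_zero, qbinom_zero, ι_eq, map_one]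
    | k + 1 =>
      rcases Nat.lt_or_ge (k + 1) (n + 1) with hlt | hge
      · have hkn : k + 1 ≤ n := by omega
        rw [gb_succ_succ, qbinom_pascal n k hkn, ι_eq, map_add, map_mul, map_pow,
          ← ι_eq Polynomial.X, ι_X, ← ι_eq, ← ι_eq, ih k (by omega), ih (k + 1) hkn]
      · obtain rfl : k = n := by omega
        rw [gb_self, qbinom_self, ι_eq, map_one]

theorem qbinom_congruence (m : ℕ) (hm : Odd m) (hm1 : 1 < m) :
    ∃ (c : Polynomial ℤ) (j : ℕ),
      (qbinom (m - 1) ((m - 1) / 2) - (-1 : RatFunc ℚ) ^ ((m - 1) / 2) *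
          q ^ ((1 - (m : ℤ) ^ 2) / 8)) * q ^ j
        = ι (Polynomial.cyclotomic m ℤ * c) := by
  obtain ⟨k, hk⟩ := hm
  have hk2 : m = 2 * k + 1 := by omega
  have hk1 : 1 ≤ k := by omega
  obtain ⟨N, hN⟩ := Nat.even_mul_succ_self k
  have hm0 : m ≠ 0 := by omega
  have hi2 : (m - 1) / 2 = k := by omega
  have hi1 : m - 1 = 2 * k := by omega
  have hexp : (1 - (m : ℤ) ^ 2) / 8 = -(N : ℤ) := by
    have hN' : (k : ℤ) * ((k : ℤ) + 1) = (N : ℤ) + (N : ℤ) := by exact_mod_cast hN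
    have hm' : (m : ℤ) = 2 * (k : ℤ) + 1 := by exact_mod_cast hk2
    have h8 : (1 - (m : ℤ) ^ 2) = 8 * (-(N : ℤ)) := by
      rw [hm']; linear_combination (-4 : ℤ) * hN'
    rw [h8, Int.mul_ediv_cancel_left _ (by norm_num)]
  obtain ⟨ζ, hζ⟩ : ∃ ζ : ℂ, IsPrimitiveRoot ζ m := ⟨_, Complex.isPrimitiveRoot_exp m hm0⟩
  have hζm : ζ ^ m = 1 := hζ.pow_eq_one
  have hzpow : ∀ j, 0 < j → j < m → (1 : ℂ) - ζ ^ j ≠ 0 := fun j h1 h2 =>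
    sub_ne_zero.mpr (Ne.symm (hζ.pow_ne_one_of_pos_of_lt h1.ne' h2))
  set G := gb (2 * k) k with hG
  set Bp : Polynomial ℤ := ∏ j ∈ Finset.range k, (1 - Polynomial.X ^ (j + 1)) with hBp
  set Ap : Polynomial ℤ := ∏ j ∈ Finset.range k, (1 - Polynomial.X ^ (k + 1 + j)) with hAp
  have hιB : ι Bp = qpoch q q k := by
    rw [hBp, ι_eq, map_prod, qpoch_eq]
    exact Finset.prod_congr rfl fun j _ => by
      rw [map_sub, map_one, map_pow, ← ι_eq Polynomial.X, ι_X]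
  have hιA : ι Ap = ∏ j ∈ Finset.range k, (1 - q ^ (k + 1 + j)) := by
    rw [hAp, ι_eq, map_prod]
    exact Finset.prod_congr rfl fun j _ => by
      rw [map_sub, map_one, map_pow, ← ι_eq Polynomial.X, ι_X]
  have hqpoch2k : qpoch q q (2 * k)
      = qpoch q q k * ∏ j ∈ Finset.range k, (1 - q ^ (k + 1 + j)) := by
    rw [qpoch_eq, qpoch_eq, show 2 * k = k + k by ring, Finset.prod_range_add]
    congr 1
    exact Finset.prod_congr rfl fun j _ => by rw [show k + j + 1 = k + 1 + j by omega]
  have hGB : G * Bp = Ap := by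
    apply ι_injective
    rw [ι_eq, map_mul, ← ι_eq, ← ι_eq, hιB, hιA, hG, ι_gb (2 * k) k (by omega), qbinom,
      show 2 * k - k = k by omega, hqpoch2k]
    have h2 := qpoch_ne_zero k
    field_simp
  set b : ℂ := ∏ j ∈ Finset.range k, (1 - ζ ^ (j + 1)) with hb_def
  set a : ℂ := ∏ j ∈ Finset.range k, (1 - ζ ^ (k + 1 + j)) with ha_def
  have hb : b ≠ 0 := Finset.prod_ne_zero_iff.mpr fun j hj =>
    hzpow (j + 1) (by omega) (by simp only [Finset.mem_range] at hj; omega)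
  have haevB : Polynomial.aeval ζ Bp = b := by
    rw [hBp, hb_def, map_prod]
    exact Finset.prod_congr rfl fun j _ => by
      rw [map_sub, map_one, map_pow, Polynomial.aeval_X]
  have haevA : Polynomial.aeval ζ Ap = a := by
    rw [hAp, ha_def, map_prod]
    exact Finset.prod_congr rfl fun j _ => by
      rw [map_sub, map_one, map_pow, Polynomial.aeval_X]
  have haev : Polynomial.aeval ζ G * b = a := by
    rw [← haevB, ← haevA, ← map_mul, hGB]
  have hsum : ∑ j ∈ Finset.range k, (k - j) = N := by
    have h1 : ∑ j ∈ Finset.range k, (k - j) = ∑ j ∈ Finset.range k, (j + 1) := by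
      rw [← Finset.sum_range_reflect (fun j => j + 1) k]
      exact Finset.sum_congr rfl fun j hj => by
        simp only [Finset.mem_range] at hj; omega
    have h2 : (∑ j ∈ Finset.range k, j) * 2 = k * (k - 1) := Finset.sum_range_id_mul_two k
    have h3 : ∑ j ∈ Finset.range k, (j + 1) = (∑ j ∈ Finset.range k, j) + k := by
      rw [Finset.sum_add_distrib, Finset.sum_const, Finset.card_range, smul_eq_mul, mul_one]
    have h4 : k * (k + 1) = k * (k - 1) + 2 * k := by
      obtain ⟨k', rfl⟩ : ∃ k', k = k' + 1 := ⟨k - 1, by omega⟩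
      simp only [Nat.add_sub_cancel]; ring
    omega
  have hzN : ζ ^ N = ∏ j ∈ Finset.range k, ζ ^ (k - j) := by
    rw [Finset.prod_pow_eq_pow_sum, hsum]
  have key : a * ζ ^ N = (-1) ^ k * b := by
    rw [ha_def, hzN, ← Finset.prod_mul_distrib]
    have hfac : ∀ j ∈ Finset.range k,
        (1 - ζ ^ (k + 1 + j)) * ζ ^ (k - j) = -1 * (1 - ζ ^ (k - j)) := by
      intro j hj
      simp only [Finset.mem_range] at hj
      have hme : (k + 1 + j) + (k - j) = m := by omega
      have hone : ζ ^ (k + 1 + j) * ζ ^ (k - j) = 1 := by rw [← pow_add, hme, hζm]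
      rw [sub_mul, one_mul, hone]; ring
    rw [Finset.prod_congr rfl hfac, Finset.prod_mul_distrib, Finset.prod_const,
      Finset.card_range]
    congr 1
    rw [hb_def, ← Finset.prod_range_reflect (fun j => 1 - ζ ^ (j + 1)) k]
    exact Finset.prod_congr rfl fun j hj => by
      simp only [Finset.mem_range] at hj
      rw [show k - 1 - j + 1 = k - j by omega]
  have hGζ : Polynomial.aeval ζ G * ζ ^ N = (-1) ^ k := by
    have h : (Polynomial.aeval ζ G * ζ ^ N) * b = ((-1) ^ k) * b := by
      calc (Polynomial.aeval ζ G * ζ ^ N) * b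
          = (Polynomial.aeval ζ G * b) * ζ ^ N := by ring
        _ = a * ζ ^ N := by rw [haev]
        _ = (-1) ^ k * b := key
    exact mul_right_cancel₀ hb h
  set P : Polynomial ℤ := G * Polynomial.X ^ N - (-1) ^ k with hP
  have hPζ : Polynomial.aeval ζ (P.map (Int.castRingHom ℚ)) = 0 := by
    rw [show Int.castRingHom ℚ = algebraMap ℤ ℚ from rfl, Polynomial.aeval_map_algebraMap,
      hP, map_sub, map_mul, map_pow, Polynomial.aeval_X, map_pow, map_neg, map_one,
      sub_eq_zero, hGζ]
  have hdvdQ : Polynomial.cyclotomic m ℚ ∣ P.map (Int.castRingHom ℚ) := by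
    rw [Polynomial.cyclotomic_eq_minpoly_rat hζ (by omega)]
    exact minpoly.dvd ℚ ζ hPζ
  have hdvd : Polynomial.cyclotomic m ℤ ∣ P := by
    rw [← Polynomial.map_dvd_map (Int.castRingHom ℚ) Int.cast_injective
      (Polynomial.cyclotomic.monic m ℤ), Polynomial.map_cyclotomic_int]
    exact hdvdQ
  obtain ⟨c, hc⟩ := hdvd
  refine ⟨c, N, ?_⟩
  rw [← hc, hi2, hi1, hexp, hP, ι_eq, map_sub, map_mul, map_pow, ← ι_eq Polynomial.X, ι_X,
    ← ι_eq, hG, ι_gb (2 * k) k (by omega), map_pow, map_neg, map_one]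
  have hqinv : q ^ (-(N : ℤ)) = (q ^ N)⁻¹ := by
    rw [zpow_neg, zpow_natCast]
  rw [hqinv]
  have hq0 : q ^ N ≠ 0 := pow_ne_zero _ (by simp [q, RatFunc.X_ne_zero])
  field_simp
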